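/- Let p_{l1}, p_{l2}, p_{r1}, p_{r2}, p_s ∈ (0,1). Then the matrix P_dhs has a unique stationary distribution: there exists exactly one row vector π ∈ ℝ¹⁰ with nonnegative entries summing to 1 such that π·P_dhs = π. (This is the equilibrium distribution of two-link entanglement distribution with double-heralded entanglement generation, whose component π_S gives the long-run throughput per time step.) -/

import Mathlib

open Matrix


noncomputable section TwoLinkDHSAux

private lemma vec10_0 {α : Type*} (a0 a1 a2 a3 a4 a5 a6 a7 a8 a9 : α) :
    ![a0,a1,a2,a3,a4,a5,a6,a7,a8,a9] (0 : Fin 10) = a0 := rfl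
private lemma vec10_1 {α : Type*} (a0 a1 a2 a3 a4 a5 a6 a7 a8 a9 : α) :
    ![a0,a1,a2,a3,a4,a5,a6,a7,a8,a9] (1 : Fin 10) = a1 := rfl
private lemma vec10_2 {α : Type*} (a0 a1 a2 a3 a4 a5 a6 a7 a8 a9 : α) :
    ![a0,a1,a2,a3,a4,a5,a6,a7,a8,a9] (2 : Fin 10) = a2 := rfl
private lemma vec10_3 {α : Type*} (a0 a1 a2 a3 a4 a5 a6 a7 a8 a9 : α) :
    ![a0,a1,a2,a3,a4,a5,a6,a7,a8,a9] (3 : Fin 10) = a3 := rfl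
private lemma vec10_4 {α : Type*} (a0 a1 a2 a3 a4 a5 a6 a7 a8 a9 : α) :
    ![a0,a1,a2,a3,a4,a5,a6,a7,a8,a9] (4 : Fin 10) = a4 := rfl
private lemma vec10_5 {α : Type*} (a0 a1 a2 a3 a4 a5 a6 a7 a8 a9 : α) :
    ![a0,a1,a2,a3,a4,a5,a6,a7,a8,a9] (5 : Fin 10) = a5 := rfl
private lemma vec10_6 {α : Type*} (a0 a1 a2 a3 a4 a5 a6 a7 a8 a9 : α) :
    ![a0,a1,a2,a3,a4,a5,a6,a7,a8,a9] (6 : Fin 10) = a6 := rfl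
private lemma vec10_7 {α : Type*} (a0 a1 a2 a3 a4 a5 a6 a7 a8 a9 : α) :
    ![a0,a1,a2,a3,a4,a5,a6,a7,a8,a9] (7 : Fin 10) = a7 := rfl
private lemma vec10_8 {α : Type*} (a0 a1 a2 a3 a4 a5 a6 a7 a8 a9 : α) :
    ![a0,a1,a2,a3,a4,a5,a6,a7,a8,a9] (8 : Fin 10) = a8 := rfl
private lemma vec10_9 {α : Type*} (a0 a1 a2 a3 a4 a5 a6 a7 a8 a9 : α) :
    ![a0,a1,a2,a3,a4,a5,a6,a7,a8,a9] (9 : Fin 10) = a9 := rfl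

private def Pg (a b c d s : ℝ) : Matrix (Fin 10) (Fin 10) ℝ :=
  !![(1-a)*(1-c), (1-a)*c, 0, a*(1-c), a*c, 0, 0, 0, 0, 0;
     (1-a)*(1-d), 0, (1-a)*d, a*(1-d), 0, a*d, 0, 0, 0, 0;
     0, 0, 1-a, 0, 0, a, 0, 0, 0, 0;
     (1-b)*(1-c), (1-b)*c, 0, 0, 0, 0, b*(1-c), b*c, 0, 0;
     (1-b)*(1-d), 0, (1-b)*d, 0, 0, 0, b*(1-d), 0, b*d, 0;
     0, 0, 1-b, 0, 0, 0, 0, 0, b, 0;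
     0, 0, 0, 0, 0, 0, 1-c, c, 0, 0;
     0, 0, 0, 0, 0, 0, 1-d, 0, d, 0;
     1-s, 0, 0, 0, 0, 0, 0, 0, 0, s;
     (1-a)*(1-c), (1-a)*c, 0, a*(1-c), a*c, 0, 0, 0, 0, 0]

private def gv (a b c d s : ℝ) : Fin 10 → ℝ :=
  ![a*b*c*d*((1 - a*c*(1-b)*(1-d)) - s*(c*d*((1-a)*(1 - a*c*(1-b)*(1-d)) + a*(1-b)*((1-c) + c*(1-a)*(1-d))) + a*b*((1-c) + c*(1-a)*(1-d)) + (1-(1-b)*(1-d))*a*c*(1 - a*c*(1-b)*(1-d)))),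
    a*b*c^2*d*((1-a)*(1 - a*c*(1-b)*(1-d)) + a*(1-b)*((1-c) + c*(1-a)*(1-d))),
    c^2*d^2*(((1-a)+a*(1-b))*((1-a)*(1 - a*c*(1-b)*(1-d)) + a*(1-b)*((1-c) + c*(1-a)*(1-d))) + a*(1-b)*(1 - a*c*(1-b)*(1-d))),
    a^2*b*c*d*((1-c) + c*(1-a)*(1-d)),
    a^2*b*c^2*d*(1 - a*c*(1-b)*(1-d)),
    a*c^2*d^2*(((1-a)*(1 - a*c*(1-b)*(1-d)) + a*(1-b)*((1-c) + c*(1-a)*(1-d))) + a*(1-b)*(1 - a*c*(1-b)*(1-d))),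
    a^2*b^2*(((1-c)+c*(1-d))*((1-c) + c*(1-a)*(1-d)) + c*(1-d)*(1 - a*c*(1-b)*(1-d))),
    a^2*b^2*c*(((1-c) + c*(1-a)*(1-d)) + c*(1-d)*(1 - a*c*(1-b)*(1-d))),
    a*b*c*d*(c*d*((1-a)*(1 - a*c*(1-b)*(1-d)) + a*(1-b)*((1-c) + c*(1-a)*(1-d))) + a*b*((1-c) + c*(1-a)*(1-d)) + (1-(1-b)*(1-d))*a*c*(1 - a*c*(1-b)*(1-d))),
    s*(a*b*c*d*(c*d*((1-a)*(1 - a*c*(1-b)*(1-d)) + a*(1-b)*((1-c) + c*(1-a)*(1-d))) + a*b*((1-c) + c*(1-a)*(1-d)) + (1-(1-b)*(1-d))*a*c*(1 - a*c*(1-b)*(1-d))))]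

private lemma sum10 (f : Fin 10 → ℝ) :
    ∑ i, f i = f 0 + (f 1 + (f 2 + (f 3 + (f 4 + (f 5 + (f 6 + (f 7 + (f 8 + (f 9))))))))) := by
  simp [Fin.sum_univ_succ]

set_option maxHeartbeats 1600000 in
private lemma gfix (a b c d s : ℝ) : (gv a b c d s) ᵥ* (Pg a b c d s) = gv a b c d s := by
  set w := gv a b c d s with hw
  have expand : ∀ i : Fin 10, (w ᵥ* (Pg a b c d s)) i =
      w 0 * Pg a b c d s 0 i + w 1 * Pg a b c d s 1 i + w 2 * Pg a b c d s 2 i +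
      w 3 * Pg a b c d s 3 i + w 4 * Pg a b c d s 4 i + w 5 * Pg a b c d s 5 i +
      w 6 * Pg a b c d s 6 i + w 7 * Pg a b c d s 7 i + w 8 * Pg a b c d s 8 i +
      w 9 * Pg a b c d s 9 i := by
    intro i
    rw [Matrix.vecMul, dotProduct, sum10]
    ring
  have f0 : (w ᵥ* (Pg a b c d s)) 0 = w 0 := by
    rw [expand]
    simp only [hw, gv, Pg, Matrix.of_apply, vec10_0, vec10_1, vec10_2, vec10_3, vec10_4,
      vec10_5, vec10_6, vec10_7, vec10_8, vec10_9]
    ring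
  have f1 : (w ᵥ* (Pg a b c d s)) 1 = w 1 := by
    rw [expand]
    simp only [hw, gv, Pg, Matrix.of_apply, vec10_0, vec10_1, vec10_2, vec10_3, vec10_4,
      vec10_5, vec10_6, vec10_7, vec10_8, vec10_9]
    ring
  have f2 : (w ᵥ* (Pg a b c d s)) 2 = w 2 := by
    rw [expand]
    simp only [hw, gv, Pg, Matrix.of_apply, vec10_0, vec10_1, vec10_2, vec10_3, vec10_4,
      vec10_5, vec10_6, vec10_7, vec10_8, vec10_9]
    ring
  have f3 : (w ᵥ* (Pg a b c d s)) 3 = w 3 := by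
    rw [expand]
    simp only [hw, gv, Pg, Matrix.of_apply, vec10_0, vec10_1, vec10_2, vec10_3, vec10_4,
      vec10_5, vec10_6, vec10_7, vec10_8, vec10_9]
    ring
  have f4 : (w ᵥ* (Pg a b c d s)) 4 = w 4 := by
    rw [expand]
    simp only [hw, gv, Pg, Matrix.of_apply, vec10_0, vec10_1, vec10_2, vec10_3, vec10_4,
      vec10_5, vec10_6, vec10_7, vec10_8, vec10_9]
    ring
  have f5 : (w ᵥ* (Pg a b c d s)) 5 = w 5 := by
    rw [expand]
    simp only [hw, gv, Pg, Matrix.of_apply, vec10_0, vec10_1, vec10_2, vec10_3, vec10_4,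
      vec10_5, vec10_6, vec10_7, vec10_8, vec10_9]
    ring
  have f6 : (w ᵥ* (Pg a b c d s)) 6 = w 6 := by
    rw [expand]
    simp only [hw, gv, Pg, Matrix.of_apply, vec10_0, vec10_1, vec10_2, vec10_3, vec10_4,
      vec10_5, vec10_6, vec10_7, vec10_8, vec10_9]
    ring
  have f7 : (w ᵥ* (Pg a b c d s)) 7 = w 7 := by
    rw [expand]
    simp only [hw, gv, Pg, Matrix.of_apply, vec10_0, vec10_1, vec10_2, vec10_3, vec10_4,
      vec10_5, vec10_6, vec10_7, vec10_8, vec10_9]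
    ring
  have f8 : (w ᵥ* (Pg a b c d s)) 8 = w 8 := by
    rw [expand]
    simp only [hw, gv, Pg, Matrix.of_apply, vec10_0, vec10_1, vec10_2, vec10_3, vec10_4,
      vec10_5, vec10_6, vec10_7, vec10_8, vec10_9]
    ring
  have f9 : (w ᵥ* (Pg a b c d s)) 9 = w 9 := by
    rw [expand]
    simp only [hw, gv, Pg, Matrix.of_apply, vec10_0, vec10_1, vec10_2, vec10_3, vec10_4,
      vec10_5, vec10_6, vec10_7, vec10_8, vec10_9]
    ring
  funext j
  fin_cases j
  · exact f0
  · exact f1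
  · exact f2
  · exact f3
  · exact f4
  · exact f5
  · exact f6
  · exact f7
  · exact f8
  · exact f9

set_option maxHeartbeats 1600000 in
private lemma keyrel (a b c d s : ℝ) (v : Fin 10 → ℝ)
    (hv : v ᵥ* (Pg a b c d s) = v) :
    ∀ i, a*b*c*d*(1 - a*c*(1-b)*(1-d)) * v i = (gv a b c d s i) * (v 0 + v 9) := by
  have e0 : v 0 * ((1-a)*(1-c)) + (v 1 * ((1-a)*(1-d)) + (v 3 * ((1-b)*(1-c)) + (v 4 * ((1-b)*(1-d)) + (v 8 * (1-s) + (v 9 * ((1-a)*(1-c))))))) = v 0 := by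
    simpa [Pg, Matrix.vecMul, dotProduct, Fin.sum_univ_succ,
      vec10_0, vec10_1, vec10_2, vec10_3, vec10_4, vec10_5, vec10_6, vec10_7, vec10_8, vec10_9]
      using congrFun hv 0
  have e1 : v 0 * ((1-a)*c) + (v 3 * ((1-b)*c) + (v 9 * ((1-a)*c))) = v 1 := by
    simpa [Pg, Matrix.vecMul, dotProduct, Fin.sum_univ_succ,
      vec10_0, vec10_1, vec10_2, vec10_3, vec10_4, vec10_5, vec10_6, vec10_7, vec10_8, vec10_9]
      using congrFun hv 1
  have e2 : v 1 * ((1-a)*d) + (v 2 * (1-a) + (v 4 * ((1-b)*d) + (v 5 * (1-b)))) = v 2 := by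
    simpa [Pg, Matrix.vecMul, dotProduct, Fin.sum_univ_succ,
      vec10_0, vec10_1, vec10_2, vec10_3, vec10_4, vec10_5, vec10_6, vec10_7, vec10_8, vec10_9]
      using congrFun hv 2
  have e3 : v 0 * (a*(1-c)) + (v 1 * (a*(1-d)) + (v 9 * (a*(1-c)))) = v 3 := by
    simpa [Pg, Matrix.vecMul, dotProduct, Fin.sum_univ_succ,
      vec10_0, vec10_1, vec10_2, vec10_3, vec10_4, vec10_5, vec10_6, vec10_7, vec10_8, vec10_9]
      using congrFun hv 3
  have e4 : v 0 * (a*c) + (v 9 * (a*c)) = v 4 := by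
    simpa [Pg, Matrix.vecMul, dotProduct, Fin.sum_univ_succ,
      vec10_0, vec10_1, vec10_2, vec10_3, vec10_4, vec10_5, vec10_6, vec10_7, vec10_8, vec10_9]
      using congrFun hv 4
  have e5 : v 1 * (a*d) + (v 2 * (a)) = v 5 := by
    simpa [Pg, Matrix.vecMul, dotProduct, Fin.sum_univ_succ,
      vec10_0, vec10_1, vec10_2, vec10_3, vec10_4, vec10_5, vec10_6, vec10_7, vec10_8, vec10_9]
      using congrFun hv 5
  have e6 : v 3 * (b*(1-c)) + (v 4 * (b*(1-d)) + (v 6 * (1-c) + (v 7 * (1-d)))) = v 6 := by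
    simpa [Pg, Matrix.vecMul, dotProduct, Fin.sum_univ_succ,
      vec10_0, vec10_1, vec10_2, vec10_3, vec10_4, vec10_5, vec10_6, vec10_7, vec10_8, vec10_9]
      using congrFun hv 6
  have e7 : v 3 * (b*c) + (v 6 * (c)) = v 7 := by
    simpa [Pg, Matrix.vecMul, dotProduct, Fin.sum_univ_succ,
      vec10_0, vec10_1, vec10_2, vec10_3, vec10_4, vec10_5, vec10_6, vec10_7, vec10_8, vec10_9]
      using congrFun hv 7
  have e8 : v 4 * (b*d) + (v 5 * (b) + (v 7 * (d))) = v 8 := by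
    simpa [Pg, Matrix.vecMul, dotProduct, Fin.sum_univ_succ,
      vec10_0, vec10_1, vec10_2, vec10_3, vec10_4, vec10_5, vec10_6, vec10_7, vec10_8, vec10_9]
      using congrFun hv 8
  have e9 : v 8 * (s) = v 9 := by
    simpa [Pg, Matrix.vecMul, dotProduct, Fin.sum_univ_succ,
      vec10_0, vec10_1, vec10_2, vec10_3, vec10_4, vec10_5, vec10_6, vec10_7, vec10_8, vec10_9]
      using congrFun hv 9
  have k4 : v 4 = a*c*(v 0 + v 9) := by
    linear_combination -e4
  have k3 : (1 - a*c*(1-b)*(1-d))*v 3 = a*((1-c) + c*(1-a)*(1-d))*(v 0 + v 9) := by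
    linear_combination -e3 - (a*(1-d))*e1
  have k1 : (1 - a*c*(1-b)*(1-d))*v 1 = c*((1-a)*(1 - a*c*(1-b)*(1-d)) + a*(1-b)*((1-c) + c*(1-a)*(1-d)))*(v 0 + v 9) := by
    linear_combination (-(1 - a*c*(1-b)*(1-d)))*e1 + (c*(1-b))*k3
  have k2 : a*b*(1 - a*c*(1-b)*(1-d))*v 2 = c*d*(((1-a)+a*(1-b))*((1-a)*(1 - a*c*(1-b)*(1-d)) + a*(1-b)*((1-c) + c*(1-a)*(1-d))) + a*(1-b)*(1 - a*c*(1-b)*(1-d)))*(v 0 + v 9) := by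
    linear_combination (-(1 - a*c*(1-b)*(1-d)))*e2 + (-(1-b)*(1 - a*c*(1-b)*(1-d)))*e5 + (d*((1-a)+a*(1-b)))*k1 + (d*(1-b)*(1 - a*c*(1-b)*(1-d)))*k4
  have k5 : b*(1 - a*c*(1-b)*(1-d))*v 5 = c*d*(((1-a)*(1 - a*c*(1-b)*(1-d)) + a*(1-b)*((1-c) + c*(1-a)*(1-d))) + a*(1-b)*(1 - a*c*(1-b)*(1-d)))*(v 0 + v 9) := by
    linear_combination (-b*(1 - a*c*(1-b)*(1-d)))*e5 + (a*d*b)*k1 + k2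
  have k6 : c*d*(1 - a*c*(1-b)*(1-d))*v 6 = a*b*(((1-c)+c*(1-d))*((1-c) + c*(1-a)*(1-d)) + c*(1-d)*(1 - a*c*(1-b)*(1-d)))*(v 0 + v 9) := by
    linear_combination (-(1 - a*c*(1-b)*(1-d)))*e6 + (-(1-d)*(1 - a*c*(1-b)*(1-d)))*e7 + (b*((1-c)+c*(1-d)))*k3 + (b*(1-d)*(1 - a*c*(1-b)*(1-d)))*k4
  have k7 : d*(1 - a*c*(1-b)*(1-d))*v 7 = a*b*(((1-c) + c*(1-a)*(1-d)) + c*(1-d)*(1 - a*c*(1-b)*(1-d)))*(v 0 + v 9) := by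
    linear_combination (-d*(1 - a*c*(1-b)*(1-d)))*e7 + (b*c*d)*k3 + k6
  have k8 : (1 - a*c*(1-b)*(1-d))*v 8 = (c*d*((1-a)*(1 - a*c*(1-b)*(1-d)) + a*(1-b)*((1-c) + c*(1-a)*(1-d))) + a*b*((1-c) + c*(1-a)*(1-d)) + (1-(1-b)*(1-d))*a*c*(1 - a*c*(1-b)*(1-d)))*(v 0 + v 9) := by
    linear_combination (-(1 - a*c*(1-b)*(1-d)))*e8 + (b*d*(1 - a*c*(1-b)*(1-d)))*k4 + k5 + k7
  have k9 : (1 - a*c*(1-b)*(1-d))*v 9 = s*(c*d*((1-a)*(1 - a*c*(1-b)*(1-d)) + a*(1-b)*((1-c) + c*(1-a)*(1-d))) + a*b*((1-c) + c*(1-a)*(1-d)) + (1-(1-b)*(1-d))*a*c*(1 - a*c*(1-b)*(1-d)))*(v 0 + v 9) := by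
    linear_combination (-(1 - a*c*(1-b)*(1-d)))*e9 + s*k8
  have k0 : (1 - a*c*(1-b)*(1-d))*v 0 = ((1 - a*c*(1-b)*(1-d)) - s*(c*d*((1-a)*(1 - a*c*(1-b)*(1-d)) + a*(1-b)*((1-c) + c*(1-a)*(1-d))) + a*b*((1-c) + c*(1-a)*(1-d)) + (1-(1-b)*(1-d))*a*c*(1 - a*c*(1-b)*(1-d))))*(v 0 + v 9) := by
    linear_combination -k9
  have K0 : a*b*c*d*(1 - a*c*(1-b)*(1-d)) * v 0 = (a*b*c*d*((1 - a*c*(1-b)*(1-d)) - s*(c*d*((1-a)*(1 - a*c*(1-b)*(1-d)) + a*(1-b)*((1-c) + c*(1-a)*(1-d))) + a*b*((1-c) + c*(1-a)*(1-d)) + (1-(1-b)*(1-d))*a*c*(1 - a*c*(1-b)*(1-d))))) * (v 0 + v 9) := by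
    linear_combination (a*b*c*d)*k0
  have K1 : a*b*c*d*(1 - a*c*(1-b)*(1-d)) * v 1 = (a*b*c^2*d*((1-a)*(1 - a*c*(1-b)*(1-d)) + a*(1-b)*((1-c) + c*(1-a)*(1-d)))) * (v 0 + v 9) := by
    linear_combination (a*b*c*d)*k1
  have K2 : a*b*c*d*(1 - a*c*(1-b)*(1-d)) * v 2 = (c^2*d^2*(((1-a)+a*(1-b))*((1-a)*(1 - a*c*(1-b)*(1-d)) + a*(1-b)*((1-c) + c*(1-a)*(1-d))) + a*(1-b)*(1 - a*c*(1-b)*(1-d)))) * (v 0 + v 9) := by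
    linear_combination (c*d)*k2
  have K3 : a*b*c*d*(1 - a*c*(1-b)*(1-d)) * v 3 = (a^2*b*c*d*((1-c) + c*(1-a)*(1-d))) * (v 0 + v 9) := by
    linear_combination (a*b*c*d)*k3
  have K4 : a*b*c*d*(1 - a*c*(1-b)*(1-d)) * v 4 = (a^2*b*c^2*d*(1 - a*c*(1-b)*(1-d))) * (v 0 + v 9) := by
    linear_combination (a*b*c*d*(1 - a*c*(1-b)*(1-d)))*k4
  have K5 : a*b*c*d*(1 - a*c*(1-b)*(1-d)) * v 5 = (a*c^2*d^2*(((1-a)*(1 - a*c*(1-b)*(1-d)) + a*(1-b)*((1-c) + c*(1-a)*(1-d))) + a*(1-b)*(1 - a*c*(1-b)*(1-d)))) * (v 0 + v 9) := by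
    linear_combination (a*c*d)*k5
  have K6 : a*b*c*d*(1 - a*c*(1-b)*(1-d)) * v 6 = (a^2*b^2*(((1-c)+c*(1-d))*((1-c) + c*(1-a)*(1-d)) + c*(1-d)*(1 - a*c*(1-b)*(1-d)))) * (v 0 + v 9) := by
    linear_combination (a*b)*k6
  have K7 : a*b*c*d*(1 - a*c*(1-b)*(1-d)) * v 7 = (a^2*b^2*c*(((1-c) + c*(1-a)*(1-d)) + c*(1-d)*(1 - a*c*(1-b)*(1-d)))) * (v 0 + v 9) := by
    linear_combination (a*b*c)*k7
  have K8 : a*b*c*d*(1 - a*c*(1-b)*(1-d)) * v 8 = (a*b*c*d*(c*d*((1-a)*(1 - a*c*(1-b)*(1-d)) + a*(1-b)*((1-c) + c*(1-a)*(1-d))) + a*b*((1-c) + c*(1-a)*(1-d)) + (1-(1-b)*(1-d))*a*c*(1 - a*c*(1-b)*(1-d)))) * (v 0 + v 9) := by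
    linear_combination (a*b*c*d)*k8
  have K9 : a*b*c*d*(1 - a*c*(1-b)*(1-d)) * v 9 = (s*(a*b*c*d*(c*d*((1-a)*(1 - a*c*(1-b)*(1-d)) + a*(1-b)*((1-c) + c*(1-a)*(1-d))) + a*b*((1-c) + c*(1-a)*(1-d)) + (1-(1-b)*(1-d))*a*c*(1 - a*c*(1-b)*(1-d))))) * (v 0 + v 9) := by
    linear_combination (a*b*c*d)*k9
  intro i
  fin_cases i <;>
    simp only [gv, vec10_0, vec10_1, vec10_2, vec10_3, vec10_4, vec10_5, vec10_6, vec10_7,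
      vec10_8, vec10_9, Matrix.cons_val_zero, Matrix.cons_val_one, Matrix.head_cons] <;>
    first
      | exact K0 | exact K1 | exact K2 | exact K3 | exact K4 | exact K5 | exact K6
      | exact K7 | exact K8 | exact K9


set_option maxRecDepth 100000 in
set_option maxHeartbeats 3200000 in
private lemma mainlem (a b c d s : ℝ)
    (ha : 0 < a) (ha' : a < 1) (hb : 0 < b) (hb' : b < 1)
    (hc : 0 < c) (hc' : c < 1) (hd : 0 < d) (hd' : d < 1)
    (hs : 0 < s) (hs' : s < 1) :
    ∃! π : Fin 10 → ℝ, (∀ i, 0 ≤ π i) ∧ (∑ i, π i = 1) ∧ π ᵥ* (Pg a b c d s) = π := by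
  have hqa : (0:ℝ) < 1-a := by linarith
  have hqb : (0:ℝ) < 1-b := by linarith
  have hqc : (0:ℝ) < 1-c := by linarith
  have hqd : (0:ℝ) < 1-d := by linarith
  have hqs : (0:ℝ) < 1-s := by linarith
  have hN : (0:ℝ) < ((1-c) + c*(1-a)*(1-d)) := by nlinarith [mul_pos (mul_pos hc hqa) hqd]
  have hD : (0:ℝ) < (1 - a*c*(1-b)*(1-d)) := by
    have u1 : a*c < 1 := by nlinarith
    have u2 : (1-b)*(1-d) < 1 := by nlinarith [mul_pos hb hd]
    have u3 : (0:ℝ) < (1-b)*(1-d) := mul_pos hqb hqd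
    nlinarith [u1, u2, u3]
  have hA : (0:ℝ) < ((1-a)*(1 - a*c*(1-b)*(1-d)) + a*(1-b)*((1-c) + c*(1-a)*(1-d))) := by nlinarith [mul_pos hqa hD, mul_pos (mul_pos ha hqb) hN]
  have hbd : (0:ℝ) < 1-(1-b)*(1-d) := by nlinarith [mul_pos hb hqd]
  have hE : (0:ℝ) < (c*d*((1-a)*(1 - a*c*(1-b)*(1-d)) + a*(1-b)*((1-c) + c*(1-a)*(1-d))) + a*b*((1-c) + c*(1-a)*(1-d)) + (1-(1-b)*(1-d))*a*c*(1 - a*c*(1-b)*(1-d))) := by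
    nlinarith [mul_pos (mul_pos hc hd) hA, mul_pos (mul_pos ha hb) hN,
      mul_pos (mul_pos (mul_pos hbd ha) hc) hD]
  have hg1 : (0:ℝ) < a*b*c^2*d*((1-a)*(1 - a*c*(1-b)*(1-d)) + a*(1-b)*((1-c) + c*(1-a)*(1-d))) :=
    mul_pos (mul_pos (mul_pos (mul_pos ha hb) (pow_pos hc 2)) hd) hA
  have hg2 : (0:ℝ) < c^2*d^2*(((1-a)+a*(1-b))*((1-a)*(1 - a*c*(1-b)*(1-d)) + a*(1-b)*((1-c) + c*(1-a)*(1-d))) + a*(1-b)*(1 - a*c*(1-b)*(1-d))) := by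
    have t1 : (0:ℝ) < (1-a)+a*(1-b) := by nlinarith [mul_pos ha hqb]
    have inner : (0:ℝ) < ((1-a)+a*(1-b))*((1-a)*(1 - a*c*(1-b)*(1-d)) + a*(1-b)*((1-c) + c*(1-a)*(1-d))) + a*(1-b)*(1 - a*c*(1-b)*(1-d)) := by
      nlinarith [mul_pos t1 hA, mul_pos (mul_pos ha hqb) hD]
    exact mul_pos (mul_pos (pow_pos hc 2) (pow_pos hd 2)) inner
  have hg3 : (0:ℝ) < a^2*b*c*d*((1-c) + c*(1-a)*(1-d)) :=
    mul_pos (mul_pos (mul_pos (mul_pos (pow_pos ha 2) hb) hc) hd) hN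
  have hg4 : (0:ℝ) < a^2*b*c^2*d*(1 - a*c*(1-b)*(1-d)) :=
    mul_pos (mul_pos (mul_pos (mul_pos (pow_pos ha 2) hb) (pow_pos hc 2)) hd) hD
  have hg5 : (0:ℝ) < a*c^2*d^2*(((1-a)*(1 - a*c*(1-b)*(1-d)) + a*(1-b)*((1-c) + c*(1-a)*(1-d))) + a*(1-b)*(1 - a*c*(1-b)*(1-d))) := by
    have inner : (0:ℝ) < ((1-a)*(1 - a*c*(1-b)*(1-d)) + a*(1-b)*((1-c) + c*(1-a)*(1-d))) + a*(1-b)*(1 - a*c*(1-b)*(1-d)) := by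
      nlinarith [hA, mul_pos (mul_pos ha hqb) hD]
    exact mul_pos (mul_pos (mul_pos ha (pow_pos hc 2)) (pow_pos hd 2)) inner
  have hg6 : (0:ℝ) < a^2*b^2*(((1-c)+c*(1-d))*((1-c) + c*(1-a)*(1-d)) + c*(1-d)*(1 - a*c*(1-b)*(1-d))) := by
    have t2 : (0:ℝ) < (1-c)+c*(1-d) := by nlinarith [mul_pos hc hqd]
    have inner : (0:ℝ) < ((1-c)+c*(1-d))*((1-c) + c*(1-a)*(1-d)) + c*(1-d)*(1 - a*c*(1-b)*(1-d)) := by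
      nlinarith [mul_pos t2 hN, mul_pos (mul_pos hc hqd) hD]
    exact mul_pos (mul_pos (pow_pos ha 2) (pow_pos hb 2)) inner
  have hg7 : (0:ℝ) < a^2*b^2*c*(((1-c) + c*(1-a)*(1-d)) + c*(1-d)*(1 - a*c*(1-b)*(1-d))) := by
    have inner : (0:ℝ) < ((1-c) + c*(1-a)*(1-d)) + c*(1-d)*(1 - a*c*(1-b)*(1-d)) := by
      nlinarith [hN, mul_pos (mul_pos hc hqd) hD]
    exact mul_pos (mul_pos (mul_pos (pow_pos ha 2) (pow_pos hb 2)) hc) inner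
  have hg8 : (0:ℝ) < a*b*c*d*(c*d*((1-a)*(1 - a*c*(1-b)*(1-d)) + a*(1-b)*((1-c) + c*(1-a)*(1-d))) + a*b*((1-c) + c*(1-a)*(1-d)) + (1-(1-b)*(1-d))*a*c*(1 - a*c*(1-b)*(1-d))) :=
    mul_pos (mul_pos (mul_pos (mul_pos ha hb) hc) hd) hE
  have hg9 : (0:ℝ) < s*(a*b*c*d*(c*d*((1-a)*(1 - a*c*(1-b)*(1-d)) + a*(1-b)*((1-c) + c*(1-a)*(1-d))) + a*b*((1-c) + c*(1-a)*(1-d)) + (1-(1-b)*(1-d))*a*c*(1 - a*c*(1-b)*(1-d)))) := mul_pos hs hg8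
  have hg0 : (0:ℝ) ≤ a*b*c*d*((1 - a*c*(1-b)*(1-d)) - s*(c*d*((1-a)*(1 - a*c*(1-b)*(1-d)) + a*(1-b)*((1-c) + c*(1-a)*(1-d))) + a*b*((1-c) + c*(1-a)*(1-d)) + (1-(1-b)*(1-d))*a*c*(1 - a*c*(1-b)*(1-d)))) := by
    have hiden : (1-(1-a)*(1-c)) * (a*b*c*d*((1 - a*c*(1-b)*(1-d)) - s*(c*d*((1-a)*(1 - a*c*(1-b)*(1-d)) + a*(1-b)*((1-c) + c*(1-a)*(1-d))) + a*b*((1-c) + c*(1-a)*(1-d)) + (1-(1-b)*(1-d))*a*c*(1 - a*c*(1-b)*(1-d))))) =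
        (1-a)*(1-c)*(s*(a*b*c*d*(c*d*((1-a)*(1 - a*c*(1-b)*(1-d)) + a*(1-b)*((1-c) + c*(1-a)*(1-d))) + a*b*((1-c) + c*(1-a)*(1-d)) + (1-(1-b)*(1-d))*a*c*(1 - a*c*(1-b)*(1-d))))) + (1-a)*(1-d)*(a*b*c^2*d*((1-a)*(1 - a*c*(1-b)*(1-d)) + a*(1-b)*((1-c) + c*(1-a)*(1-d)))) + (1-b)*(1-c)*(a^2*b*c*d*((1-c) + c*(1-a)*(1-d)))
          + (1-b)*(1-d)*(a^2*b*c^2*d*(1 - a*c*(1-b)*(1-d))) + (1-s)*(a*b*c*d*(c*d*((1-a)*(1 - a*c*(1-b)*(1-d)) + a*(1-b)*((1-c) + c*(1-a)*(1-d))) + a*b*((1-c) + c*(1-a)*(1-d)) + (1-(1-b)*(1-d))*a*c*(1 - a*c*(1-b)*(1-d)))) := by ring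
    have h1ac : (0:ℝ) < 1-(1-a)*(1-c) := by nlinarith [mul_pos ha hqc]
    nlinarith [hiden, h1ac, mul_pos (mul_pos hqa hqc) hg9, mul_pos (mul_pos hqa hqd) hg1,
      mul_pos (mul_pos hqb hqc) hg3, mul_pos (mul_pos hqb hqd) hg4, mul_pos hqs hg8]
  have hGnn : ∀ i, (0:ℝ) ≤ gv a b c d s i := by
    intro i
    fin_cases i <;> simp only [gv, vec10_0, vec10_1, vec10_2, vec10_3, vec10_4, vec10_5, vec10_6, vec10_7, vec10_8, vec10_9]
    · exact hg0
    · exact hg1.le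
    · exact hg2.le
    · exact hg3.le
    · exact hg4.le
    · exact hg5.le
    · exact hg6.le
    · exact hg7.le
    · exact hg8.le
    · exact hg9.le
  set S : ℝ := ∑ j, gv a b c d s j with hSdef
  have hSpos : (0:ℝ) < S := by
    rw [hSdef, sum10]
    simp only [gv, vec10_0, vec10_1, vec10_2, vec10_3, vec10_4, vec10_5, vec10_6, vec10_7, vec10_8, vec10_9]
    nlinarith [hg0, hg1, hg2, hg3, hg4, hg5, hg6, hg7, hg8, hg9]
  have hSne : S ≠ 0 := hSpos.ne'
  have habcd : (0:ℝ) < a*b*c*d*(1 - a*c*(1-b)*(1-d)) :=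
    mul_pos (mul_pos (mul_pos (mul_pos ha hb) hc) hd) hD
  refine ⟨fun i => gv a b c d s i / S, ⟨?_, ?_, ?_⟩, ?_⟩
  · intro i
    exact div_nonneg (hGnn i) hSpos.le
  · rw [← Finset.sum_div, ← hSdef, div_self hSne]
  · have hrw : (fun i => gv a b c d s i / S) = S⁻¹ • gv a b c d s := by
      funext i
      simp [div_eq_inv_mul]
    rw [hrw, Matrix.smul_vecMul, gfix]
  · rintro v ⟨-, hsum, hfixv⟩
    have K := keyrel a b c d s v hfixv
    have K0' := K 0
    simp only [gv, vec10_0, vec10_1, vec10_2, vec10_3, vec10_4, vec10_5, vec10_6, vec10_7, vec10_8, vec10_9] at K0'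
    have K1' := K 1
    simp only [gv, vec10_0, vec10_1, vec10_2, vec10_3, vec10_4, vec10_5, vec10_6, vec10_7, vec10_8, vec10_9] at K1'
    have K2' := K 2
    simp only [gv, vec10_0, vec10_1, vec10_2, vec10_3, vec10_4, vec10_5, vec10_6, vec10_7, vec10_8, vec10_9] at K2'
    have K3' := K 3
    simp only [gv, vec10_0, vec10_1, vec10_2, vec10_3, vec10_4, vec10_5, vec10_6, vec10_7, vec10_8, vec10_9] at K3'
    have K4' := K 4
    simp only [gv, vec10_0, vec10_1, vec10_2, vec10_3, vec10_4, vec10_5, vec10_6, vec10_7, vec10_8, vec10_9] at K4'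
    have K5' := K 5
    simp only [gv, vec10_0, vec10_1, vec10_2, vec10_3, vec10_4, vec10_5, vec10_6, vec10_7, vec10_8, vec10_9] at K5'
    have K6' := K 6
    simp only [gv, vec10_0, vec10_1, vec10_2, vec10_3, vec10_4, vec10_5, vec10_6, vec10_7, vec10_8, vec10_9] at K6'
    have K7' := K 7
    simp only [gv, vec10_0, vec10_1, vec10_2, vec10_3, vec10_4, vec10_5, vec10_6, vec10_7, vec10_8, vec10_9] at K7'
    have K8' := K 8
    simp only [gv, vec10_0, vec10_1, vec10_2, vec10_3, vec10_4, vec10_5, vec10_6, vec10_7, vec10_8, vec10_9] at K8'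
    have K9' := K 9
    simp only [gv, vec10_0, vec10_1, vec10_2, vec10_3, vec10_4, vec10_5, vec10_6, vec10_7, vec10_8, vec10_9] at K9'
    have hv10 : v 0 + (v 1 + (v 2 + (v 3 + (v 4 + (v 5 + (v 6 + (v 7 + (v 8 + v 9)))))))) = 1 := by
      rw [← sum10]; exact hsum
    have hx : S * (v 0 + v 9) = a*b*c*d*(1 - a*c*(1-b)*(1-d)) := by
      rw [hSdef, sum10]
      simp only [gv, vec10_0, vec10_1, vec10_2, vec10_3, vec10_4, vec10_5, vec10_6, vec10_7, vec10_8, vec10_9]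
      linear_combination (-1:ℝ)*K0' - K1' - K2' - K3' - K4' - K5' - K6' - K7' - K8' - K9'
        + (a*b*c*d*(1 - a*c*(1-b)*(1-d)))*hv10
    have hv0 : v 0 = gv a b c d s 0 / S := by
      rw [eq_div_iff hSne]
      simp only [gv, vec10_0, vec10_1, vec10_2, vec10_3, vec10_4, vec10_5, vec10_6, vec10_7, vec10_8, vec10_9]
      exact mul_left_cancel₀ habcd.ne'
        (by linear_combination S * K0' + (a*b*c*d*((1 - a*c*(1-b)*(1-d)) - s*(c*d*((1-a)*(1 - a*c*(1-b)*(1-d)) + a*(1-b)*((1-c) + c*(1-a)*(1-d))) + a*b*((1-c) + c*(1-a)*(1-d)) + (1-(1-b)*(1-d))*a*c*(1 - a*c*(1-b)*(1-d))))) * hx)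
    have hv1 : v 1 = gv a b c d s 1 / S := by
      rw [eq_div_iff hSne]
      simp only [gv, vec10_0, vec10_1, vec10_2, vec10_3, vec10_4, vec10_5, vec10_6, vec10_7, vec10_8, vec10_9]
      exact mul_left_cancel₀ habcd.ne'
        (by linear_combination S * K1' + (a*b*c^2*d*((1-a)*(1 - a*c*(1-b)*(1-d)) + a*(1-b)*((1-c) + c*(1-a)*(1-d)))) * hx)
    have hv2 : v 2 = gv a b c d s 2 / S := by
      rw [eq_div_iff hSne]
      simp only [gv, vec10_0, vec10_1, vec10_2, vec10_3, vec10_4, vec10_5, vec10_6, vec10_7, vec10_8, vec10_9]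
      exact mul_left_cancel₀ habcd.ne'
        (by linear_combination S * K2' + (c^2*d^2*(((1-a)+a*(1-b))*((1-a)*(1 - a*c*(1-b)*(1-d)) + a*(1-b)*((1-c) + c*(1-a)*(1-d))) + a*(1-b)*(1 - a*c*(1-b)*(1-d)))) * hx)
    have hv3 : v 3 = gv a b c d s 3 / S := by
      rw [eq_div_iff hSne]
      simp only [gv, vec10_0, vec10_1, vec10_2, vec10_3, vec10_4, vec10_5, vec10_6, vec10_7, vec10_8, vec10_9]
      exact mul_left_cancel₀ habcd.ne'
        (by linear_combination S * K3' + (a^2*b*c*d*((1-c) + c*(1-a)*(1-d))) * hx)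
    have hv4 : v 4 = gv a b c d s 4 / S := by
      rw [eq_div_iff hSne]
      simp only [gv, vec10_0, vec10_1, vec10_2, vec10_3, vec10_4, vec10_5, vec10_6, vec10_7, vec10_8, vec10_9]
      exact mul_left_cancel₀ habcd.ne'
        (by linear_combination S * K4' + (a^2*b*c^2*d*(1 - a*c*(1-b)*(1-d))) * hx)
    have hv5 : v 5 = gv a b c d s 5 / S := by
      rw [eq_div_iff hSne]
      simp only [gv, vec10_0, vec10_1, vec10_2, vec10_3, vec10_4, vec10_5, vec10_6, vec10_7, vec10_8, vec10_9]
      exact mul_left_cancel₀ habcd.ne'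
        (by linear_combination S * K5' + (a*c^2*d^2*(((1-a)*(1 - a*c*(1-b)*(1-d)) + a*(1-b)*((1-c) + c*(1-a)*(1-d))) + a*(1-b)*(1 - a*c*(1-b)*(1-d)))) * hx)
    have hv6 : v 6 = gv a b c d s 6 / S := by
      rw [eq_div_iff hSne]
      simp only [gv, vec10_0, vec10_1, vec10_2, vec10_3, vec10_4, vec10_5, vec10_6, vec10_7, vec10_8, vec10_9]
      exact mul_left_cancel₀ habcd.ne'
        (by linear_combination S * K6' + (a^2*b^2*(((1-c)+c*(1-d))*((1-c) + c*(1-a)*(1-d)) + c*(1-d)*(1 - a*c*(1-b)*(1-d)))) * hx)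
    have hv7 : v 7 = gv a b c d s 7 / S := by
      rw [eq_div_iff hSne]
      simp only [gv, vec10_0, vec10_1, vec10_2, vec10_3, vec10_4, vec10_5, vec10_6, vec10_7, vec10_8, vec10_9]
      exact mul_left_cancel₀ habcd.ne'
        (by linear_combination S * K7' + (a^2*b^2*c*(((1-c) + c*(1-a)*(1-d)) + c*(1-d)*(1 - a*c*(1-b)*(1-d)))) * hx)
    have hv8 : v 8 = gv a b c d s 8 / S := by
      rw [eq_div_iff hSne]
      simp only [gv, vec10_0, vec10_1, vec10_2, vec10_3, vec10_4, vec10_5, vec10_6, vec10_7, vec10_8, vec10_9]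
      exact mul_left_cancel₀ habcd.ne'
        (by linear_combination S * K8' + (a*b*c*d*(c*d*((1-a)*(1 - a*c*(1-b)*(1-d)) + a*(1-b)*((1-c) + c*(1-a)*(1-d))) + a*b*((1-c) + c*(1-a)*(1-d)) + (1-(1-b)*(1-d))*a*c*(1 - a*c*(1-b)*(1-d)))) * hx)
    have hv9 : v 9 = gv a b c d s 9 / S := by
      rw [eq_div_iff hSne]
      simp only [gv, vec10_0, vec10_1, vec10_2, vec10_3, vec10_4, vec10_5, vec10_6, vec10_7, vec10_8, vec10_9]
      exact mul_left_cancel₀ habcd.ne'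
        (by linear_combination S * K9' + (s*(a*b*c*d*(c*d*((1-a)*(1 - a*c*(1-b)*(1-d)) + a*(1-b)*((1-c) + c*(1-a)*(1-d))) + a*b*((1-c) + c*(1-a)*(1-d)) + (1-(1-b)*(1-d))*a*c*(1 - a*c*(1-b)*(1-d))))) * hx)
    funext i
    fin_cases i
    · exact hv0
    · exact hv1
    · exact hv2
    · exact hv3
    · exact hv4
    · exact hv5
    · exact hv6
    · exact hv7
    · exact hv8
    · exact hv9

end TwoLinkDHSAux



/-- The 10×10 transition matrix of two-link entanglement distribution with
double-heralded entanglement generation (round-`i` success probabilities `pl i`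
on the left link and `pr i` on the right link, `i ∈ {1,2}`) and entanglement
swapping success probability `ps`, with states ordered
`(00, 01, 02, 10, 11, 12, 20, 21, 22, S)`, has a unique stationary distribution:
exactly one row vector `π` with nonnegative entries summing to `1` satisfies
`π·P_dhs = π`. -/
theorem two_link_double_heralded_unique_stationary (pl1 pl2 pr1 pr2 ps : ℝ)
    (hl1 : 0 < pl1) (hl1' : pl1 < 1) (hl2 : 0 < pl2) (hl2' : pl2 < 1)
    (hr1 : 0 < pr1) (hr1' : pr1 < 1) (hr2 : 0 < pr2) (hr2' : pr2 < 1)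
    (hs : 0 < ps) (hs' : ps < 1) :
    let P : Matrix (Fin 10) (Fin 10) ℝ :=
      !![(1-pl1)*(1-pr1), (1-pl1)*pr1, 0, pl1*(1-pr1), pl1*pr1, 0, 0, 0, 0, 0;
         (1-pl1)*(1-pr2), 0, (1-pl1)*pr2, pl1*(1-pr2), 0, pl1*pr2, 0, 0, 0, 0;
         0, 0, 1-pl1, 0, 0, pl1, 0, 0, 0, 0;
         (1-pl2)*(1-pr1), (1-pl2)*pr1, 0, 0, 0, 0, pl2*(1-pr1), pl2*pr1, 0, 0;
         (1-pl2)*(1-pr2), 0, (1-pl2)*pr2, 0, 0, 0, pl2*(1-pr2), 0, pl2*pr2, 0;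
         0, 0, 1-pl2, 0, 0, 0, 0, 0, pl2, 0;
         0, 0, 0, 0, 0, 0, 1-pr1, pr1, 0, 0;
         0, 0, 0, 0, 0, 0, 1-pr2, 0, pr2, 0;
         1-ps, 0, 0, 0, 0, 0, 0, 0, 0, ps;
         (1-pl1)*(1-pr1), (1-pl1)*pr1, 0, pl1*(1-pr1), pl1*pr1, 0, 0, 0, 0, 0]
    ∃! π : Fin 10 → ℝ, (∀ s, 0 ≤ π s) ∧ (∑ s, π s = 1) ∧ π ᵥ* P = π := by
  intro P
  exact mainlem pl1 pl2 pr1 pr2 ps hl1 hl1' hl2 hl2' hr1 hr1' hr2 hr2' hs hs'
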